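/- The minimum wirelength of embedding the hypercube Q_n into the path P_{2^n} on 2^n vertices equals 2^{2n−1} − 2^{n−1}, for n ≥ 2, and this minimum is achieved by the reflected Gray code embedding ξ_n. -/

import Mathlib

open Finset

/-- Number of coordinates in which two 0-1 vectors differ. -/
def diffCount {n : ℕ} (u v : Fin n → Bool) : ℕ :=
  (Finset.univ.filter fun i => u i ≠ v i).card

/-- Adjacency in the hypercube `Q_n`: differ in exactly one coordinate. -/
def cubeAdj {n : ℕ} (u v : Fin n → Bool) : Prop := diffCount u v = 1

instance {n : ℕ} (u v : Fin n → Bool) : Decidable (cubeAdj u v) :=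
  inferInstanceAs (Decidable (diffCount u v = 1))

/-- `theta n S`: number of edges of `Q_n` with exactly one endpoint in `S`. -/
def theta (n : ℕ) (S : Finset (Fin n → Bool)) : ℕ :=
  ((Finset.univ ×ˢ Finset.univ).filter fun p : (Fin n → Bool) × (Fin n → Bool) =>
    p.1 ∈ S ∧ p.2 ∉ S ∧ cubeAdj p.1 p.2).card

/-- The reflected Gray code map `ξ_n : {0,1}^n → {1,...,2^n}`. -/
def gray : (n : ℕ) → (Fin n → Bool) → ℕ
  | 0, _ => 1
  | n + 1, v =>
    if v 0 = false then gray n (fun i => v i.succ)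
    else 2 ^ (n + 1) + 1 - gray n (fun i => v i.succ)

/-- Wirelength of an embedding `f` of `Q_n` into a host with distance `d`. -/
def wirelength {n : ℕ} {α : Type*} (d : α → α → ℕ) (f : (Fin n → Bool) → α) : ℕ :=
  (∑ u : Fin n → Bool, ∑ v : Fin n → Bool, if cubeAdj u v then d (f u) (f v) else 0) / 2

/-- Cyclic distance on the cycle with `m` vertices labeled `1,...,m`. -/
def cycDist (m a b : ℕ) : ℕ := min (Nat.dist a b) (m - Nat.dist a b)

/-- The 2-order Gray code map. -/
def gray2 (n₁ n₂ : ℕ) (v : Fin (n₁ + n₂) → Bool) : ℕ × ℕ :=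
  (gray n₁ fun i => v (Fin.castAdd n₂ i), gray n₂ fun i => v (Fin.natAdd n₁ i))


section AuxWL


/-- binary digit sum -/
def bs : ℕ → ℕ
  | 0 => 0
  | (n+1) => bs ((n+1)/2) + (n+1) % 2
decreasing_by exact Nat.div_lt_self (Nat.succ_pos n) one_lt_two

lemma bs_two_mul (k : ℕ) : bs (2*k) = bs k := by
  cases k with
  | zero => rfl
  | succ m =>
    have h : 2*(m+1) = (2*m+1)+1 := by ring
    rw [h, bs]
    have h1 : (2*m+1+1)/2 = m+1 := by omega
    have h2 : (2*m+1+1) % 2 = 0 := by omega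
    rw [h1, h2, add_zero]

lemma bs_two_mul_add_one (k : ℕ) : bs (2*k+1) = bs k + 1 := by
  rw [bs]
  have h1 : (2*k+1)/2 = k := by omega
  have h2 : (2*k+1) % 2 = 1 := by omega
  rw [h1, h2]

/-- max number of edges induced on k vertices of a hypercube -/
def fmax (k : ℕ) : ℕ := ∑ i ∈ Finset.range k, bs i

lemma fmax_succ (k : ℕ) : fmax (k+1) = fmax k + bs k := Finset.sum_range_succ _ _

lemma fmax_two_mul (k : ℕ) : fmax (2*k) = 2 * fmax k + k := by
  induction k with
  | zero => rfl
  | succ m ih =>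
    have h : 2*(m+1) = (2*m) + 1 + 1 := by ring
    rw [h, fmax_succ, fmax_succ]
    rw [show (2*m:ℕ)+1 = 2*m+1 from rfl, bs_two_mul, bs_two_mul_add_one, ih, fmax_succ]
    ring

lemma fmax_two_mul_add_one (k : ℕ) : fmax (2*k+1) = 2 * fmax k + k + bs k := by
  rw [fmax_succ, fmax_two_mul, bs_two_mul]

lemma fmax_superadd_aux : ∀ N a b : ℕ, a + b = N → b ≤ a → fmax a + fmax b + b ≤ fmax (a+b) := by
  intro N
  induction N using Nat.strong_induction_on with
  | _ N IH =>
  intro a b hN hba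
  rcases Nat.eq_zero_or_pos b with hb | hb
  · subst hb; simp [fmax]
  have ha : 1 ≤ a := le_trans hb hba
  obtain ⟨x, ra, hra, hax⟩ : ∃ x r, r < 2 ∧ a = 2*x + r := ⟨a/2, a%2, Nat.mod_lt _ two_pos, by omega⟩
  obtain ⟨y, rb, hrb, hby⟩ : ∃ y r, r < 2 ∧ b = 2*y + r := ⟨b/2, b%2, Nat.mod_lt _ two_pos, by omega⟩
  subst hax hby
  have h1 := IH (x+y) (by omega) x y rfl (by omega)
  interval_cases ra <;> interval_cases rb <;> try simp only [add_zero] at *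
  · -- both even
    have e1 : fmax (2*x + 2*y) = 2 * fmax (x+y) + (x+y) := by
      rw [show 2*x+2*y = 2*(x+y) by ring, fmax_two_mul]
    have e2 := fmax_two_mul x
    have e3 := fmax_two_mul y
    omega
  · -- a even, b odd
    have h2 := IH (x+y+1) (by omega) x (y+1) (by omega) (by omega)
    rw [show x+(y+1) = (x+y)+1 by ring, fmax_succ, fmax_succ] at h2
    have e1 : fmax (2*x + (2*y+1)) = 2 * fmax (x+y) + (x+y) + bs (x+y) := by
      rw [show 2*x+(2*y+1) = 2*(x+y)+1 by ring, fmax_two_mul_add_one]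
    have e2 := fmax_two_mul x
    have e3 := fmax_two_mul_add_one y
    omega
  · -- a odd, b even
    have h2 := IH (x+y+1) (by omega) (x+1) y (by omega) (by omega)
    rw [show x+1+y = (x+y)+1 by ring, fmax_succ, fmax_succ] at h2
    have e1 : fmax (2*x+1 + 2*y) = 2 * fmax (x+y) + (x+y) + bs (x+y) := by
      rw [show 2*x+1+2*y = 2*(x+y)+1 by ring, fmax_two_mul_add_one]
    have e2 := fmax_two_mul_add_one x
    have e3 := fmax_two_mul y
    omega
  · -- both odd
    have e1 : fmax (2*x+1 + (2*y+1)) = 2 * fmax (x+y+1) + (x+y+1) := by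
      rw [show 2*x+1+(2*y+1) = 2*(x+y+1) by ring, fmax_two_mul]
    have e2 := fmax_two_mul_add_one x
    have e3 := fmax_two_mul_add_one y
    have h2 := IH (x+y+1) (by omega) (x+1) y (by omega) (by omega)
    rw [show x+1+y = (x+y)+1 by ring, fmax_succ, fmax_succ] at h2
    rcases Nat.lt_or_ge y x with hlt | hge
    · have h3 := IH (x+y+1) (by omega) x (y+1) (by omega) (by omega)
      rw [show x+(y+1) = (x+y)+1 by ring, fmax_succ, fmax_succ] at h3
      have e4 := fmax_succ (x+y)
      omega
    · have hxy : x = y := by omega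
      subst hxy
      have e4 := fmax_succ (x+x)
      omega

lemma fmax_superadd {a b : ℕ} (h : b ≤ a) : fmax a + fmax b + b ≤ fmax (a+b) :=
  fmax_superadd_aux (a+b) a b rfl h


lemma bs_zero : bs 0 = 0 := by rw [bs]

lemma fmax_zero : fmax 0 = 0 := rfl

lemma fmax_one : fmax 1 = 0 := by
  rw [show (1:ℕ) = 0 + 1 from rfl, fmax_succ, fmax_zero, bs_zero]

/-- sum of fmax over range -/
noncomputable def Fsum (m : ℕ) : ℕ := ∑ k ∈ Finset.range m, fmax k

lemma Fsum_succ (m : ℕ) : Fsum (m+1) = Fsum m + fmax m := Finset.sum_range_succ _ _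

lemma fmax_pow (n : ℕ) : 2 * fmax (2^n) = n * 2^n := by
  induction n with
  | zero =>
    have : (2:ℕ)^0 = 0 + 1 := rfl
    rw [this, fmax_succ, fmax_zero]
    have := bs_zero
    omega
  | succ n ih =>
    rw [pow_succ, show (2:ℕ)^n*2 = 2*2^n by ring, fmax_two_mul]
    zify at ih ⊢
    linear_combination 2 * ih

lemma Fsum_two_mul (M : ℕ) : Fsum (2*M) + M = 4 * Fsum M + M*M + fmax M := by
  induction M with
  | zero => simp [Fsum, fmax_zero]
  | succ m ih =>
    have e0 : 2*(m+1) = (2*m) + 1 + 1 := by ring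
    rw [e0, Fsum_succ, Fsum_succ, Fsum_succ]
    have e2 := fmax_two_mul m
    have e3 := fmax_two_mul_add_one m
    have e4 := fmax_succ m
    have e5 : (m+1)*(m+1) = m*m + 2*m + 1 := by ring
    rw [e5]
    obtain ⟨P, hP⟩ : ∃ P, m*m = P := ⟨_, rfl⟩
    rw [hP] at ih ⊢
    omega

lemma sumid : ∀ n : ℕ, 1 ≤ n →
    n * (2^n * 2^n) + 2^n = n * 2^n + 2^n * 2^n + 4 * Fsum (2^n) := by
  intro n hn
  induction n with
  | zero => omega
  | succ n ih =>
    rcases Nat.eq_zero_or_pos n with h0 | h0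
    · subst h0
      norm_num [Fsum, Finset.sum_range_succ, fmax_zero]
      have : (1:ℕ) = 0 + 1 := rfl
      rw [this, fmax_succ, fmax_zero]
      have := bs_zero
      omega
    have IH := ih h0
    have E1 := Fsum_two_mul (2^n)
    have E2 := fmax_pow n
    rw [pow_succ, show (2:ℕ)^n*2 = 2*2^n by ring]
    zify at IH E1 E2 ⊢
    linear_combination 4*IH - 4*E1 - 2*E2

lemma diffCount_eq_sum {n : ℕ} (u v : Fin n → Bool) :
    diffCount u v = ∑ i, (if u i ≠ v i then 1 else 0) := by
  rw [diffCount, Finset.card_filter]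

lemma diffCount_cons {n : ℕ} (a b : Bool) (w x : Fin n → Bool) :
    diffCount (Fin.cons a w) (Fin.cons b x) = (if a = b then 0 else 1) + diffCount w x := by
  rw [diffCount_eq_sum, Fin.sum_univ_succ, diffCount_eq_sum]
  simp only [Fin.cons_zero, Fin.cons_succ]
  by_cases h : a = b <;> simp [h]

lemma diffCount_eq_zero {n : ℕ} (u v : Fin n → Bool) : diffCount u v = 0 ↔ u = v := by
  rw [diffCount, Finset.card_eq_zero, Finset.filter_eq_empty_iff]
  constructor
  · intro h; funext i; have := h (Finset.mem_univ i); simpa using this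
  · intro h i _; simp [h]

lemma cubeAdj_cons {n : ℕ} (a b : Bool) (w x : Fin n → Bool) :
    cubeAdj (Fin.cons a w) (Fin.cons b x) ↔
      ((a = b ∧ cubeAdj w x) ∨ (¬(a = b) ∧ w = x)) := by
  rw [cubeAdj, diffCount_cons, cubeAdj]
  split_ifs with h
  · simp [h]
  · rw [show (1 + diffCount w x = 1) ↔ (diffCount w x = 0) by omega, diffCount_eq_zero]
    simp [h]

lemma diffCount_comm {n : ℕ} (u v : Fin n → Bool) : diffCount u v = diffCount v u := by
  unfold diffCount
  congr 1
  ext i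
  simp [ne_comm]

lemma cubeAdj_symm {n : ℕ} (u v : Fin n → Bool) : cubeAdj u v ↔ cubeAdj v u := by
  unfold cubeAdj
  rw [diffCount_comm]

lemma sumCons {M : Type*} [AddCommMonoid M] {n : ℕ} (g : (Fin (n+1) → Bool) → M) :
    ∑ v, g v = ∑ b : Bool, ∑ x : Fin n → Bool, g (Fin.cons b x) := by
  rw [← (Fin.consEquiv (fun _ : Fin (n+1) => Bool)).sum_comp g, Fintype.sum_prod_type]
  rfl

lemma degree_eq {n : ℕ} (u : Fin n → Bool) :
    (∑ v, if cubeAdj u v then 1 else 0) = n := by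
  induction n with
  | zero =>
    simp [cubeAdj, diffCount]
  | succ n ih =>
    rw [← Fin.cons_self_tail u, sumCons, Fintype.sum_bool]
    have key : ∀ b : Bool, ∑ x : Fin n → Bool,
        (if cubeAdj (Fin.cons (u 0) (Fin.tail u)) (Fin.cons b x) then 1 else 0)
        = if b = u 0 then n else 1 := by
      intro b
      by_cases hb : b = u 0
      · rw [if_pos hb]
        have h2 : ∀ x, cubeAdj (Fin.cons (u 0) (Fin.tail u)) (Fin.cons b x) ↔
            cubeAdj (Fin.tail u) x := by
          intro x
          rw [cubeAdj_cons]
          constructor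
          · rintro (⟨_, h⟩ | ⟨h, _⟩)
            · exact h
            · exact absurd hb.symm h
          · intro h; exact Or.inl ⟨hb.symm, h⟩
        simp only [h2]
        exact ih (Fin.tail u)
      · rw [if_neg hb]
        have : ∀ x : Fin n → Bool,
            cubeAdj (Fin.cons (u 0) (Fin.tail u)) (Fin.cons b x) ↔ x = Fin.tail u := by
          intro x
          rw [cubeAdj_cons]
          constructor
          · rintro (⟨h, _⟩ | ⟨_, h⟩)
            · exact absurd h.symm hb
            · exact h.symm
          · intro h; exact Or.inr ⟨fun hh => hb hh.symm, h.symm⟩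
        simp only [this]
        simp
    rw [key, key]
    cases hu : u 0 <;> simp [hu, Nat.add_comm]

def Ecount (n : ℕ) (S : Finset (Fin n → Bool)) : ℕ :=
  ∑ u, ∑ v, if u ∈ S ∧ v ∈ S ∧ cubeAdj u v then 1 else 0

def Tcount (n : ℕ) (S : Finset (Fin n → Bool)) : ℕ :=
  ∑ u, ∑ v, if u ∈ S ∧ v ∉ S ∧ cubeAdj u v then 1 else 0

lemma Ecount_add_Tcount (n : ℕ) (S : Finset (Fin n → Bool)) :
    Ecount n S + Tcount n S = n * S.card := by
  unfold Ecount Tcount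
  rw [← Finset.sum_add_distrib]
  have h1 : ∀ u : Fin n → Bool,
      ((∑ v, if u ∈ S ∧ v ∈ S ∧ cubeAdj u v then 1 else 0) +
       (∑ v, if u ∈ S ∧ v ∉ S ∧ cubeAdj u v then 1 else 0))
      = if u ∈ S then (n:ℕ) else 0 := by
    intro u
    rw [← Finset.sum_add_distrib]
    by_cases hu : u ∈ S
    · rw [if_pos hu]
      have : (∑ v, ((if u ∈ S ∧ v ∈ S ∧ cubeAdj u v then 1 else 0) +
          if u ∈ S ∧ v ∉ S ∧ cubeAdj u v then 1 else 0))
          = ∑ v, if cubeAdj u v then 1 else 0 := by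
        apply Finset.sum_congr rfl
        intro v _
        by_cases hv : v ∈ S <;> by_cases ha : cubeAdj u v <;> simp [hu, hv, ha]
      rw [this, degree_eq u]
    · rw [if_neg hu]
      apply Finset.sum_eq_zero
      intro v _
      simp [hu]
  rw [Finset.sum_congr rfl (fun u _ => h1 u), Finset.sum_ite_mem,
      Finset.univ_inter, Finset.sum_const, smul_eq_mul, mul_comm]

lemma Ecount_succ (n : ℕ) (S : Finset (Fin (n+1) → Bool)) :
    Ecount (n+1) S =
      Ecount n (univ.filter (fun w => Fin.cons false w ∈ S)) +
      Ecount n (univ.filter (fun w => Fin.cons true w ∈ S)) +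
      2 * ((univ.filter (fun w => Fin.cons false w ∈ S)) ∩
           (univ.filter (fun w => Fin.cons true w ∈ S))).card := by
  unfold Ecount
  rw [sumCons]
  simp only [sumCons, Fintype.sum_bool, Finset.sum_add_distrib]
  have hsame : ∀ a : Bool,
      (∑ w : Fin n → Bool, ∑ x : Fin n → Bool,
        if Fin.cons a w ∈ S ∧ Fin.cons a x ∈ S ∧ cubeAdj (Fin.cons a w) (Fin.cons a x)
        then 1 else 0)
      = ∑ u : Fin n → Bool, ∑ v : Fin n → Bool,
          if u ∈ Finset.filter (fun w => Fin.cons a w ∈ S) Finset.univ ∧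
             v ∈ Finset.filter (fun w => Fin.cons a w ∈ S) Finset.univ ∧ cubeAdj u v
          then 1 else 0 := by
    intro a
    apply Finset.sum_congr rfl; intro w _
    apply Finset.sum_congr rfl; intro x _
    congr 1
    rw [cubeAdj_cons]
    simp [Finset.mem_filter]
  have hdiff : ∀ a b : Bool, a ≠ b →
      (∑ w : Fin n → Bool, ∑ x : Fin n → Bool,
        if Fin.cons a w ∈ S ∧ Fin.cons b x ∈ S ∧ cubeAdj (Fin.cons a w) (Fin.cons b x)
        then 1 else 0)
      = #(Finset.filter (fun w => Fin.cons a w ∈ S) Finset.univ ∩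
          Finset.filter (fun w => Fin.cons b w ∈ S) Finset.univ) := by
    intro a b hab
    rw [← Finset.filter_and, Finset.card_filter]
    apply Finset.sum_congr rfl; intro w _
    have hpt : ∀ x : Fin n → Bool,
        (Fin.cons a w ∈ S ∧ Fin.cons b x ∈ S ∧ cubeAdj (Fin.cons a w) (Fin.cons b x))
        ↔ (w = x ∧ (Fin.cons a w ∈ S ∧ Fin.cons b x ∈ S)) := by
      intro x
      rw [cubeAdj_cons]
      constructor
      · rintro ⟨h1, h2, (⟨he, _⟩ | ⟨_, he⟩)⟩
        · exact absurd he hab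
        · exact ⟨he, h1, h2⟩
      · rintro ⟨he, h1, h2⟩
        exact ⟨h1, h2, Or.inr ⟨hab, he⟩⟩
    simp only [hpt]
    have : ∀ x : Fin n → Bool,
        (if w = x ∧ (Fin.cons a w ∈ S ∧ Fin.cons b x ∈ S) then 1 else 0)
        = if w = x then (if Fin.cons a w ∈ S ∧ Fin.cons b x ∈ S then 1 else 0) else 0 := by
      intro x
      by_cases h : w = x <;> simp [h]
    simp only [this]
    rw [Finset.sum_ite_eq]
    simp
  rw [hsame true, hsame false, hdiff true false (by simp), hdiff false true (by simp),
      Finset.inter_comm (Finset.filter (fun w => Fin.cons true w ∈ S) Finset.univ)]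
  ring

lemma card_split (n : ℕ) (S : Finset (Fin (n+1) → Bool)) :
    S.card = (univ.filter (fun w => Fin.cons false w ∈ S)).card +
             (univ.filter (fun w => Fin.cons true w ∈ S)).card := by
  have h0 : Finset.filter (fun u => u ∈ S) Finset.univ = S := by ext u; simp
  conv_lhs => rw [← h0]
  rw [Finset.card_filter, sumCons, Fintype.sum_bool,
      ← Finset.card_filter, ← Finset.card_filter]
  omega

lemma cubeAdj_zero_false (u v : Fin 0 → Bool) : ¬ cubeAdj u v := by
  intro h
  unfold cubeAdj diffCount at h
  simp at h

lemma harper : ∀ (n : ℕ) (S : Finset (Fin n → Bool)), Ecount n S ≤ 2 * fmax S.card := by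
  intro n
  induction n with
  | zero =>
    intro S
    simp [Ecount, cubeAdj_zero_false]
  | succ n ih =>
    intro S
    rw [Ecount_succ, card_split]
    set Tf := univ.filter (fun w => Fin.cons false w ∈ S) with hTf
    set Tt := univ.filter (fun w => Fin.cons true w ∈ S) with hTt
    have h1 : Ecount n Tf ≤ 2 * fmax Tf.card := ih Tf
    have h2 : Ecount n Tt ≤ 2 * fmax Tt.card := ih Tt
    have h3 : (Tf ∩ Tt).card ≤ Tf.card := Finset.card_le_card Finset.inter_subset_left
    have h4 : (Tf ∩ Tt).card ≤ Tt.card := Finset.card_le_card Finset.inter_subset_right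
    rcases le_total Tf.card Tt.card with h | h
    · have h5 := fmax_superadd h
      rw [add_comm Tt.card Tf.card] at h5
      omega
    · have h5 := fmax_superadd h
      omega

lemma Tcount_lower (n : ℕ) (S : Finset (Fin n → Bool)) :
    n * S.card ≤ Tcount n S + 2 * fmax S.card := by
  have h1 := Ecount_add_Tcount n S
  have h2 := harper n S
  omega

def Dsum {n : ℕ} (f : (Fin n → Bool) → ℕ) : ℕ :=
  ∑ u, ∑ v, if cubeAdj u v then Nat.dist (f u) (f v) else 0

lemma dist_as_sum {m a b : ℕ} (ha1 : 1 ≤ a) (ham : a ≤ m) (hb1 : 1 ≤ b) (hbm : b ≤ m) :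
    Nat.dist a b = ∑ k ∈ Icc 1 (m-1),
      ((if a ≤ k ∧ ¬ b ≤ k then 1 else 0) + (if b ≤ k ∧ ¬ a ≤ k then 1 else 0)) := by
  rw [Finset.sum_add_distrib]
  have e1 : (Finset.Icc 1 (m-1)).filter (fun k => a ≤ k ∧ ¬ b ≤ k) = Finset.Ico a b := by
    ext k
    simp only [Finset.mem_filter, Finset.mem_Icc, Finset.mem_Ico]
    omega
  have e2 : (Finset.Icc 1 (m-1)).filter (fun k => b ≤ k ∧ ¬ a ≤ k) = Finset.Ico b a := by
    ext k
    simp only [Finset.mem_filter, Finset.mem_Icc, Finset.mem_Ico]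
    omega
  rw [← Finset.card_filter, ← Finset.card_filter, e1, e2, Nat.card_Ico, Nat.card_Ico]
  show a - b + (b - a) = b - a + (a - b)
  omega

lemma Dsum_eq_cuts {n : ℕ} (m : ℕ) (f : (Fin n → Bool) → ℕ)
    (hf : ∀ u, 1 ≤ f u ∧ f u ≤ m) :
    Dsum f = 2 * ∑ k ∈ Icc 1 (m-1), Tcount n (univ.filter (fun u => f u ≤ k)) := by
  unfold Dsum
  have step1 : ∀ u v : Fin n → Bool,
      (if cubeAdj u v then Nat.dist (f u) (f v) else 0)
      = ∑ k ∈ Icc 1 (m-1),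
          ((if f u ≤ k ∧ ¬ f v ≤ k ∧ cubeAdj u v then 1 else 0) +
           (if f v ≤ k ∧ ¬ f u ≤ k ∧ cubeAdj u v then 1 else 0)) := by
    intro u v
    by_cases ha : cubeAdj u v
    · rw [if_pos ha, dist_as_sum (hf u).1 (hf u).2 (hf v).1 (hf v).2]
      apply Finset.sum_congr rfl
      intro k _
      simp [ha]
    · rw [if_neg ha]
      symm
      apply Finset.sum_eq_zero
      intro k _
      simp [ha]
  simp only [step1]
  have hswap : ∀ u : Fin n → Bool,
      (∑ v : Fin n → Bool, ∑ k ∈ Icc 1 (m-1),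
        ((if f u ≤ k ∧ ¬f v ≤ k ∧ cubeAdj u v then 1 else 0) +
          if f v ≤ k ∧ ¬f u ≤ k ∧ cubeAdj u v then 1 else 0))
      = ∑ k ∈ Icc 1 (m-1), ∑ v : Fin n → Bool,
        ((if f u ≤ k ∧ ¬f v ≤ k ∧ cubeAdj u v then 1 else 0) +
          if f v ≤ k ∧ ¬f u ≤ k ∧ cubeAdj u v then 1 else 0) :=
    fun u => Finset.sum_comm
  simp only [hswap]
  rw [Finset.sum_comm, Finset.mul_sum]
  apply Finset.sum_congr rfl
  intro k _
  simp only [Finset.sum_add_distrib]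
  have hA : (∑ u : Fin n → Bool, ∑ v : Fin n → Bool,
      if f u ≤ k ∧ ¬ f v ≤ k ∧ cubeAdj u v then 1 else 0)
      = Tcount n (univ.filter (fun u => f u ≤ k)) := by
    unfold Tcount
    apply Finset.sum_congr rfl; intro u _
    apply Finset.sum_congr rfl; intro v _
    congr 1
    simp [Finset.mem_filter]
  have hB : (∑ u : Fin n → Bool, ∑ v : Fin n → Bool,
      if f v ≤ k ∧ ¬ f u ≤ k ∧ cubeAdj u v then 1 else 0)
      = Tcount n (univ.filter (fun u => f u ≤ k)) := by
    rw [Finset.sum_comm]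
    unfold Tcount
    apply Finset.sum_congr rfl; intro u _
    apply Finset.sum_congr rfl; intro v _
    congr 1
    rw [cubeAdj_symm]
    simp [Finset.mem_filter]
  rw [hA, hB]
  ring


lemma card_Ak {n : ℕ} (f : (Fin n → Bool) → ℕ)
    (hbij : Set.BijOn f Set.univ (Set.Icc 1 (2^n))) {k : ℕ} (hk : k ≤ 2^n) :
    (univ.filter (fun u => f u ≤ k)).card = k := by
  have hinj : Function.Injective f := fun a b hab =>
    hbij.injOn (Set.mem_univ a) (Set.mem_univ b) hab
  have key : (univ.filter (fun u => f u ≤ k)).card = (Finset.Icc 1 k).card := by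
    apply Finset.card_bij (fun u _ => f u)
    · intro u hu
      simp only [Finset.mem_filter] at hu
      have hm := hbij.mapsTo (Set.mem_univ u)
      simp only [Set.mem_Icc] at hm
      simp only [Finset.mem_Icc]
      exact ⟨hm.1, hu.2⟩
    · intro a _ b _ hab
      exact hinj hab
    · intro j hj
      simp only [Finset.mem_Icc] at hj
      have hjm : j ∈ Set.Icc 1 (2^n) := ⟨hj.1, le_trans hj.2 hk⟩
      obtain ⟨u, -, hu⟩ := hbij.surjOn hjm
      exact ⟨u, Finset.mem_filter.mpr ⟨Finset.mem_univ u, by omega⟩, hu⟩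
  rw [key, Nat.card_Icc]
  omega

lemma Dsum_lower {n : ℕ} (hn : 1 ≤ n) (f : (Fin n → Bool) → ℕ)
    (hbij : Set.BijOn f Set.univ (Set.Icc 1 (2^n))) :
    2^(2*n) - 2^n ≤ Dsum f := by
  have hf : ∀ u, 1 ≤ f u ∧ f u ≤ 2^n := fun u => by
    have := hbij.mapsTo (Set.mem_univ u)
    exact ⟨this.1, this.2⟩
  rw [Dsum_eq_cuts (2^n) f hf]
  set m := 2^n with hm
  have hm1 : 1 ≤ m := Nat.one_le_two_pow
  have hT : ∀ k ∈ Icc 1 (m-1),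
      n * k ≤ Tcount n (univ.filter (fun u => f u ≤ k)) + 2 * fmax k := by
    intro k hk
    simp only [Finset.mem_Icc] at hk
    have hkm : k ≤ 2^n := by omega
    have hc := card_Ak f hbij hkm
    have h2 := Tcount_lower n (univ.filter (fun u => f u ≤ k))
    rw [hc] at h2
    exact h2
  have hsum : (∑ k ∈ Icc 1 (m-1), n * k)
      ≤ (∑ k ∈ Icc 1 (m-1), Tcount n (univ.filter (fun u => f u ≤ k)))
        + 2 * ∑ k ∈ Icc 1 (m-1), fmax k := by
    calc (∑ k ∈ Icc 1 (m-1), n * k)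
        ≤ ∑ k ∈ Icc 1 (m-1), (Tcount n (univ.filter (fun u => f u ≤ k)) + 2 * fmax k) :=
          Finset.sum_le_sum hT
      _ = _ := by rw [Finset.sum_add_distrib, ← Finset.mul_sum]
  have hIccR : ∀ g : ℕ → ℕ, g 0 = 0 →
      ∑ k ∈ Icc 1 (m-1), g k = ∑ k ∈ Finset.range m, g k := by
    intro g hg0
    have hr : Finset.range m = insert 0 (Finset.Icc 1 (m-1)) := by
      ext j
      simp only [Finset.mem_range, Finset.mem_insert, Finset.mem_Icc]
      omega
    rw [hr, Finset.sum_insert (by simp), hg0, zero_add]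
  have hFs : ∑ k ∈ Icc 1 (m-1), fmax k = Fsum m := hIccR fmax fmax_zero
  have hs' : 2 * (∑ k ∈ Icc 1 (m-1), k) + m = m * m := by
    rw [hIccR (fun k => k) rfl]
    have hg := Finset.sum_range_id_mul_two m
    obtain ⟨p, hp⟩ : ∃ p, m = p + 1 := ⟨m - 1, by omega⟩
    rw [hp] at hg ⊢
    simp only [Nat.add_sub_cancel] at hg
    have : (p+1) * p + (p+1) = (p+1)*(p+1) := by ring
    omega
  have hmulsum : (∑ k ∈ Icc 1 (m-1), n * k) = n * ∑ k ∈ Icc 1 (m-1), k :=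
    (Finset.mul_sum _ _ _).symm
  have hns : n * (2 * (∑ k ∈ Icc 1 (m-1), k)) + n * m = n * (m*m) := by
    rw [← Nat.left_distrib, hs']
  have hns2 : n * (2 * (∑ k ∈ Icc 1 (m-1), k)) = 2 * (n * ∑ k ∈ Icc 1 (m-1), k) := by ring
  have hid := sumid n hn
  rw [← hm] at hid
  have hpow : 2^(2*n) = m * m := by rw [two_mul, pow_add]
  rw [hFs, hmulsum] at hsum
  rw [hpow]
  omega


lemma gray_cons {n : ℕ} (a : Bool) (w : Fin n → Bool) :
    gray (n+1) (Fin.cons a w) =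
      if a = false then gray n w else 2^(n+1) + 1 - gray n w := by
  have ht : (fun i : Fin n => (Fin.cons a w : Fin (n+1) → Bool) i.succ) = w := by
    funext i; simp
  rw [gray, Fin.cons_zero, ht]

lemma gray_mem : ∀ (n : ℕ) (v : Fin n → Bool), 1 ≤ gray n v ∧ gray n v ≤ 2^n := by
  intro n
  induction n with
  | zero => intro v; exact ⟨le_refl 1, le_refl 1⟩
  | succ n ih =>
    intro v
    have hv : v = Fin.cons (v 0) (Fin.tail v) := (Fin.cons_self_tail v).symm
    rw [hv, gray_cons]
    have h := ih (Fin.tail v)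
    have hp : (2:ℕ)^(n+1) = 2 * 2^n := by rw [pow_succ]; ring
    cases v 0 <;> simp <;> omega

lemma gray_inj : ∀ (n : ℕ), Function.Injective (gray n) := by
  intro n
  induction n with
  | zero => intro u v _; funext i; exact absurd i.2 (by omega)
  | succ n ih =>
    intro u v h
    have hu : u = Fin.cons (u 0) (Fin.tail u) := (Fin.cons_self_tail u).symm
    have hv : v = Fin.cons (v 0) (Fin.tail v) := (Fin.cons_self_tail v).symm
    rw [hu, gray_cons] at h
    rw [hv, gray_cons] at h
    have h1 := gray_mem n (Fin.tail u)
    have h2 := gray_mem n (Fin.tail v)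
    have hp : (2:ℕ)^(n+1) = 2 * 2^n := by rw [pow_succ]; ring
    have htail : Fin.tail u = Fin.tail v := by
      apply ih
      cases hcu : u 0 <;> cases hcv : v 0 <;> rw [hcu, hcv] at h <;> simp at h <;> omega
    have hhead : u 0 = v 0 := by
      cases hcu : u 0 <;> cases hcv : v 0 <;> rw [hcu, hcv] at h <;> simp at h <;> omega
    rw [hu, hv, htail, hhead]
lemma gray_image (n : ℕ) : Finset.univ.image (gray n) = Finset.Icc 1 (2^n) := by
  apply Finset.eq_of_subset_of_card_le
  · intro j hj
    simp only [Finset.mem_image] at hj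
    obtain ⟨v, -, hv⟩ := hj
    have := gray_mem n v
    simp only [Finset.mem_Icc]
    omega
  · rw [Nat.card_Icc, Finset.card_image_of_injective _ (gray_inj n)]
    simp [Fintype.card_fun]

lemma gray_bijOn (n : ℕ) : Set.BijOn (gray n) Set.univ (Set.Icc 1 (2^n)) := by
  refine ⟨fun v _ => ?_, fun a _ b _ hab => gray_inj n hab, fun j hj => ?_⟩
  · have := gray_mem n v
    exact ⟨this.1, this.2⟩
  · simp only [Set.mem_Icc] at hj
    have : j ∈ Finset.Icc 1 (2^n) := Finset.mem_Icc.mpr hj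
    rw [← gray_image n] at this
    simp only [Finset.mem_image] at this
    obtain ⟨v, -, hv⟩ := this
    exact ⟨v, Set.mem_univ v, hv⟩

lemma gray_sum_eq (n : ℕ) (g : ℕ → ℕ) :
    ∑ v : Fin n → Bool, g (gray n v) = ∑ j ∈ Finset.Icc 1 (2^n), g j := by
  rw [← gray_image n, Finset.sum_image (fun a _ b _ hab => gray_inj n hab)]

lemma refl_sum (K : ℕ) : ∑ j ∈ Finset.Icc 1 K, (2*K + 1 - 2*j) = K * K := by
  induction K with
  | zero => simp
  | succ p ih =>
    rw [← Finset.Ico_add_one_right_eq_Icc, Finset.sum_Ico_succ_top (by omega), Finset.Ico_add_one_right_eq_Icc]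
    have hstep : ∑ j ∈ Finset.Icc 1 p, (2*(p+1) + 1 - 2*j)
        = ∑ j ∈ Finset.Icc 1 p, ((2*p + 1 - 2*j) + 2) := by
      apply Finset.sum_congr rfl
      intro j hj
      simp only [Finset.mem_Icc] at hj
      omega
    rw [hstep, Finset.sum_add_distrib, Finset.sum_const, ih, Nat.card_Icc]
    simp only [smul_eq_mul]
    have : (p+1) * (p+1) = p*p + 2*p + 1 := by ring
    omega

lemma Dsum_gray : ∀ n : ℕ, Dsum (gray n) + 2^n = 2^(2*n) := by
  intro n
  induction n with
  | zero => simp [Dsum, cubeAdj_zero_false]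
  | succ n ih =>
    have hMp : (2:ℕ)^(n+1) = 2*2^n := by rw [pow_succ]; ring
    have hKK : (2:ℕ)^n * 2^n = 2^(2*n) := by rw [two_mul, pow_add]
    have hP4 : (2:ℕ)^(2*(n+1)) = 4 * 2^(2*n) := by
      rw [show 2*(n+1) = 2*n + 2 by ring, pow_add]
      ring
    unfold Dsum
    rw [sumCons]
    simp only [sumCons, Fintype.sum_bool, Finset.sum_add_distrib, gray_cons, reduceIte]
    have hsame : ∀ c : ℕ, (∀ w : Fin n → Bool, gray n w ≤ c) →
        ∀ w x : Fin n → Bool,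
        (if cubeAdj (Fin.cons true w) (Fin.cons true x)
          then Nat.dist (c + 1 - gray n w) (c + 1 - gray n x) else 0)
        = (if cubeAdj w x then Nat.dist (gray n w) (gray n x) else 0) := by
      intro c hc w x
      have hcnd : cubeAdj (Fin.cons true w) (Fin.cons true x) ↔ cubeAdj w x := by
        rw [cubeAdj_cons]; simp
      by_cases h : cubeAdj w x
      · rw [if_pos (hcnd.mpr h), if_pos h]
        have b1 := gray_mem n w
        have b2 := gray_mem n x
        have c1 := hc w
        have c2 := hc x
        simp only [Nat.dist]
        omega
      · rw [if_neg (fun hh => h (hcnd.mp hh)), if_neg h]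
    have hdiag : ∀ (a b : Bool), a ≠ b → ∀ (val : (Fin n → Bool) → (Fin n → Bool) → ℕ),
        (∑ w : Fin n → Bool, ∑ x : Fin n → Bool,
          (if cubeAdj (Fin.cons a w) (Fin.cons b x) then val w x else 0))
        = ∑ w : Fin n → Bool, val w w := by
      intro a b hab val
      apply Finset.sum_congr rfl
      intro w _
      have hpt : ∀ x, (if cubeAdj (Fin.cons a w) (Fin.cons b x) then val w x else 0)
          = (if w = x then val w x else 0) := by
        intro x
        congr 1
        rw [cubeAdj_cons]
        simp [hab]
      simp only [hpt]
      rw [Finset.sum_ite_eq]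
      simp
    have hrefl : (∑ w : Fin n → Bool, (2^(n+1) + 1 - 2 * gray n w)) = 2^(2*n) := by
      have := gray_sum_eq n (fun a => 2^(n+1) + 1 - 2*a)
      rw [this]
      rw [← hKK]
      simp only [hMp]
      exact refl_sum (2^n)
    simp only [show (true = false) = False from by simp, if_false]
    have hb : ∀ w : Fin n → Bool, gray n w ≤ 2^(n+1) := fun w =>
      le_trans (gray_mem n w).2 (by omega)
    have htt := hsame (2^(n+1)) hb
    have hff : ∀ w x : Fin n → Bool,
        (if cubeAdj (Fin.cons false w) (Fin.cons false x)
          then Nat.dist (gray n w) (gray n x) else 0)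
        = (if cubeAdj w x then Nat.dist (gray n w) (gray n x) else 0) :=
      fun w x => if_congr (by rw [cubeAdj_cons]; simp) rfl rfl
    simp only [htt, hff]
    rw [hdiag false true (by simp) (fun w x => Nat.dist (gray n w) (2^(n+1) + 1 - gray n x)),
        hdiag true false (by simp) (fun w x => Nat.dist (2^(n+1) + 1 - gray n w) (gray n x))]
    have hv1 : (∑ w : Fin n → Bool, Nat.dist (gray n w) (2^(n+1) + 1 - gray n w))
        = ∑ w : Fin n → Bool, (2^(n+1) + 1 - 2 * gray n w) := by
      apply Finset.sum_congr rfl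
      intro w _
      have := gray_mem n w
      simp only [Nat.dist]
      omega
    have hv2 : (∑ w : Fin n → Bool, Nat.dist (2^(n+1) + 1 - gray n w) (gray n w))
        = ∑ w : Fin n → Bool, (2^(n+1) + 1 - 2 * gray n w) := by
      apply Finset.sum_congr rfl
      intro w _
      have := gray_mem n w
      simp only [Nat.dist]
      omega
    rw [hv1, hv2, hrefl]
    have hDD : (∑ u : Fin n → Bool, ∑ v : Fin n → Bool,
        if cubeAdj u v then Nat.dist (gray n u) (gray n v) else 0) = Dsum (gray n) := rfl
    rw [hDD]
    omega


end AuxWL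

/-- Minimum wirelength of the hypercube into the path `P_{2^n}`, achieved by Gray code. -/
theorem stmt7 (n : ℕ) (hn : 2 ≤ n) :
    (∀ f : (Fin n → Bool) → ℕ, Set.BijOn f Set.univ (Set.Icc 1 (2 ^ n)) →
      2 ^ (2 * n - 1) - 2 ^ (n - 1) ≤ wirelength Nat.dist f) ∧
    Set.BijOn (gray n) Set.univ (Set.Icc 1 (2 ^ n)) ∧
    wirelength Nat.dist (gray n) = 2 ^ (2 * n - 1) - 2 ^ (n - 1) := by
  have hn1 : 1 ≤ n := by omega
  have h2t : 2 * (2^(2*n-1) - 2^(n-1)) = 2^(2*n) - 2^n := by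
    have e1 : (2:ℕ)^(2*n) = 2 * 2^(2*n-1) := by
      rw [show 2*n = (2*n-1)+1 by omega, pow_succ]; exact mul_comm _ 2
    have e2 : (2:ℕ)^n = 2 * 2^(n-1) := by
      rw [show n = (n-1)+1 by omega, pow_succ]; exact mul_comm _ 2
    have e3 : (2:ℕ)^(n-1) ≤ 2^(2*n-1) := Nat.pow_le_pow_right (by norm_num) (by omega)
    omega
  refine ⟨?_, gray_bijOn n, ?_⟩
  · intro f hf
    have hD := Dsum_lower hn1 f hf
    show 2^(2*n-1) - 2^(n-1) ≤ Dsum f / 2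
    omega
  · show Dsum (gray n) / 2 = 2^(2*n-1) - 2^(n-1)
    have hD := Dsum_gray n
    have hpow : (2:ℕ)^n ≤ 2^(2*n) := Nat.pow_le_pow_right (by norm_num) (by omega)
    omega
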